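/- For all real υ ≥ -1 and λ ∈ [0,1), exp(λυ - ψ_E(λ)υ²) ≤ 1 + λυ, where ψ_E(λ) = -λ - log(1-λ). -/

import Mathlib

open Real

lemma log_quad_bound (l : ℝ) (hl0 : 0 ≤ l) (hl1 : l < 1) :
    Real.log (1 - l) ≤ -l - l ^ 2 / 2 := by
  set g : ℝ → ℝ := fun x => -x - x ^ 2 / 2 - Real.log (1 - x) with hg
  have hder : ∀ t ∈ Set.Icc (0:ℝ) l, HasDerivAt g (-1 - t + 1 / (1 - t)) t := by
    intro t ht
    have h1t : (0:ℝ) < 1 - t := by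
      have := ht.2; linarith
    have h1 : HasDerivAt (fun x : ℝ => 1 - x) (-1) t := by
      simpa using (hasDerivAt_id t).const_sub 1
    have h2 : HasDerivAt (fun x : ℝ => Real.log (1 - x)) (-1 / (1 - t)) t :=
      h1.log h1t.ne'
    have h3 : HasDerivAt (fun x : ℝ => -x - x ^ 2 / 2) (-1 - t) t := by
      have := ((hasDerivAt_pow 2 t).div_const 2).neg
      have h4 : HasDerivAt (fun x : ℝ => -x) (-1) t := (hasDerivAt_id t).neg
      exact (h4.sub ((hasDerivAt_pow 2 t).div_const 2)).congr_deriv (by norm_num)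
    have := h3.sub h2
    refine this.congr_deriv ?_
    ring
  have hmono : MonotoneOn g (Set.Icc 0 l) := by
    apply monotoneOn_of_deriv_nonneg (convex_Icc 0 l)
    · intro t ht
      exact (hder t ht).continuousAt.continuousWithinAt
    · intro t ht
      rw [interior_Icc] at ht
      exact ((hder t (Set.mem_Icc_of_Ioo ht)).differentiableAt).differentiableWithinAt
    · intro t ht
      rw [interior_Icc] at ht
      rw [(hder t (Set.mem_Icc_of_Ioo ht)).deriv]
      have h1t : (0:ℝ) < 1 - t := by linarith [ht.2]
      have heq : -1 - t + 1 / (1 - t) = t ^ 2 / (1 - t) := by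
        field_simp; ring
      rw [heq]
      positivity
  have h0 : g 0 ≤ g l :=
    hmono (Set.left_mem_Icc.mpr hl0) (Set.right_mem_Icc.mpr hl0) hl0
  norm_num [hg] at h0
  nlinarith [h0]

theorem fan_inequality (υ l : ℝ) (hυ : -1 ≤ υ) (hl0 : 0 ≤ l) (hl1 : l < 1) :
    Real.exp (l * υ - (-l - Real.log (1 - l)) * υ ^ 2) ≤ 1 + l * υ := by
  set c : ℝ := l + Real.log (1 - l) with hc_def
  have h1l : (0:ℝ) < 1 - l := by linarith
  have hc : c ≤ 0 := by
    have := Real.log_le_sub_one_of_pos h1l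
    simp only [hc_def]; linarith
  have hc2 : l ^ 2 + 2 * c ≤ 0 := by
    have := log_quad_bound l hl0 hl1
    simp only [hc_def]; linarith
  have hpos : ∀ t : ℝ, -1 ≤ t → 0 < 1 + l * t := by
    intro t ht; nlinarith
  set f : ℝ → ℝ := fun u => Real.log (1 + l * u) - l * u - c * u ^ 2 with hf
  set H : ℝ → ℝ := fun t => -(2 * c) - l ^ 2 / (1 + l * t) with hH
  have hder : ∀ t : ℝ, -1 ≤ t → HasDerivAt f (t * H t) t := by
    intro t ht
    have hpt := hpos t ht
    have h1 : HasDerivAt (fun u : ℝ => 1 + l * u) l t := by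
      simpa using ((hasDerivAt_id t).const_mul l).const_add 1
    have h2 : HasDerivAt (fun u : ℝ => Real.log (1 + l * u)) (l / (1 + l * t)) t :=
      h1.log hpt.ne'
    have h3 : HasDerivAt (fun u : ℝ => l * u) l t := by
      simpa using (hasDerivAt_id t).const_mul l
    have h4 : HasDerivAt (fun u : ℝ => c * u ^ 2) (c * (2 * t)) t := by
      simpa using (hasDerivAt_pow 2 t).const_mul c
    have := (h2.sub h3).sub h4
    refine this.congr_deriv ?_
    simp only [hH]
    field_simp
    ring
  have hHmono : ∀ t1 t2 : ℝ, -1 ≤ t1 → t1 ≤ t2 → H t1 ≤ H t2 := by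
    intro t1 t2 h1 h12
    have hp1 := hpos t1 h1
    have hp2 := hpos t2 (by linarith)
    simp only [hH]
    have h12' : 1 + l * t1 ≤ 1 + l * t2 := by nlinarith
    have : l ^ 2 / (1 + l * t2) ≤ l ^ 2 / (1 + l * t1) :=
      div_le_div_of_nonneg_left (sq_nonneg l) hp1 h12'
    linarith
  have hH0 : 0 ≤ H 0 := by
    simp only [hH]
    rw [mul_zero, add_zero, div_one]
    linarith
  -- f(-1) = 0 and f(0) = 0
  have hfm1 : f (-1) = 0 := by
    simp only [hf, hc_def]
    ring_nf
  have hf0 : f 0 = 0 := by simp [hf]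
  -- continuity / differentiability on any Icc within [-1, ∞)
  have hkey : 0 ≤ f υ := by
    have monoOn : ∀ a b : ℝ, -1 ≤ a → (∀ t ∈ Set.Ioo a b, 0 ≤ t * H t) →
        MonotoneOn f (Set.Icc a b) := by
      intro a b ha hsign
      apply monotoneOn_of_deriv_nonneg (convex_Icc a b)
      · intro t ht
        exact (hder t (le_trans ha ht.1)).continuousAt.continuousWithinAt
      · intro t ht
        rw [interior_Icc] at ht
        exact (hder t (by linarith [ht.1])).differentiableAt.differentiableWithinAt
      · intro t ht
        rw [interior_Icc] at ht
        rw [(hder t (by linarith [ht.1])).deriv]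
        exact hsign t ht
    have antiOn : ∀ a b : ℝ, -1 ≤ a → (∀ t ∈ Set.Ioo a b, t * H t ≤ 0) →
        AntitoneOn f (Set.Icc a b) := by
      intro a b ha hsign
      apply antitoneOn_of_deriv_nonpos (convex_Icc a b)
      · intro t ht
        exact (hder t (le_trans ha ht.1)).continuousAt.continuousWithinAt
      · intro t ht
        rw [interior_Icc] at ht
        exact (hder t (by linarith [ht.1])).differentiableAt.differentiableWithinAt
      · intro t ht
        rw [interior_Icc] at ht
        rw [(hder t (by linarith [ht.1])).deriv]
        exact hsign t ht
    rcases le_or_gt υ 0 with hu0 | hu0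
    · rcases le_or_gt (H υ) 0 with hHu | hHu
      · -- f monotone on [-1, υ], f(-1)=0
        have := monoOn (-1) υ le_rfl (by
          intro t ht
          have hHt : H t ≤ 0 := le_trans (hHmono t υ (le_of_lt ht.1) (le_of_lt ht.2)) hHu
          have : t ≤ 0 := le_trans (le_of_lt ht.2) hu0
          nlinarith [mul_nonneg (neg_nonneg.2 this) (neg_nonneg.2 hHt)])
        have := this (Set.mem_Icc.mpr ⟨le_rfl, by linarith⟩)
          (Set.mem_Icc.mpr ⟨hυ, le_rfl⟩) hυ
        rw [hfm1] at this
        exact this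
      · -- f antitone on [υ, 0], f(0)=0
        have := antiOn υ 0 hυ (by
          intro t ht
          have hHt : 0 ≤ H t := le_trans (le_of_lt hHu) (hHmono υ t hυ (le_of_lt ht.1))
          exact mul_nonpos_of_nonpos_of_nonneg (le_of_lt ht.2) hHt)
        have := this (Set.mem_Icc.mpr ⟨le_rfl, hu0⟩)
          (Set.mem_Icc.mpr ⟨hu0, le_rfl⟩) hu0
        rw [hf0] at this
        exact this
    · -- f monotone on [0, υ], f(0)=0
      have := monoOn 0 υ (by norm_num) (by
        intro t ht
        have hHt : 0 ≤ H t := le_trans hH0 (hHmono 0 t (by norm_num) (le_of_lt ht.1))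
        exact mul_nonneg (le_of_lt ht.1) hHt)
      have := this (Set.mem_Icc.mpr ⟨le_rfl, le_of_lt hu0⟩)
        (Set.mem_Icc.mpr ⟨le_of_lt hu0, le_rfl⟩) (le_of_lt hu0)
      rw [hf0] at this
      exact this
  -- conclude
  have hlog : l * υ + c * υ ^ 2 ≤ Real.log (1 + l * υ) := by
    simp only [hf] at hkey; linarith
  have hexp : Real.exp (l * υ + c * υ ^ 2) ≤ 1 + l * υ := by
    calc Real.exp (l * υ + c * υ ^ 2) ≤ Real.exp (Real.log (1 + l * υ)) :=
          Real.exp_le_exp.mpr hlog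
      _ = 1 + l * υ := Real.exp_log (hpos υ hυ)
  have : l * υ - (-l - Real.log (1 - l)) * υ ^ 2 = l * υ + c * υ ^ 2 := by
    simp only [hc_def]; ring
  rw [this]
  exact hexp
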